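/- Let p, q ≥ 2 be coprime integers and let 𝒜 be the set of pairs of integers (k,l) with 1 ≤ k ≤ p−1, 1 ≤ l ≤ q−1 and k ≡ l (mod 2). For every function c : 𝒜 → ℂ there exists a unique family of complex numbers a(i,j), indexed by pairs (i,j) with 1 ≤ i ≤ p−1 and 1 ≤ j ≤ q−1, satisfying the symmetry a(i,j) = a(p−i, q−j) for all (i,j), and such that for every (k,l) ∈ 𝒜: ∑_{i=1}^{p−1} ∑_{j=1}^{q−1} a(i,j)·sin(π·i·k/p)·sin(π·j·l/q) = c(k,l). -/

import Mathlib

open scoped BigOperators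

open Finset


noncomputable def sc (n i k : ℕ) : ℂ := ((Real.sin (Real.pi * i * k / n) : ℝ) : ℂ)

lemma aux_inv (x : ℂ) (hx : x ≠ 0) (h1 : x ≠ 1) : 1/(x-1) + 1/(x⁻¹-1) = -1 := by
  have h2 : x - 1 ≠ 0 := sub_ne_zero.mpr h1
  have h3 : x⁻¹ - 1 ≠ 0 := sub_ne_zero.mpr (by simp [inv_eq_one, h1])
  field_simp
  ring

lemma aux2 (e x y : ℂ) (hx0 : x ≠ 0) (hx1 : x ≠ 1) (hy0 : y ≠ 0) (hy1 : y ≠ 1) :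
    -(1/4) * (((e-1)/(x⁻¹-1) - 1) - ((e-1)/(y⁻¹-1) - 1) - ((e-1)/(y-1) - 1) + ((e-1)/(x-1) - 1)) = 0 := by
  have h1 := aux_inv x hx0 hx1
  have h2 := aux_inv y hy0 hy1
  linear_combination (-(1/4)*(e-1)) * h1 + ((1/4)*(e-1)) * h2

lemma geomF (p : ℕ) (hp : 2 ≤ p) (r : ℂ) (hr : r ≠ 1) :
    ∑ i ∈ Icc 1 (p-1), r^i = (r^p - 1)/(r-1) - 1 := by
  have h1 : Icc 1 (p-1) = Ico 1 p := by
    ext x; simp only [mem_Icc, mem_Ico]; omega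
  have h2 : ∑ i ∈ range p, r^i = r^0 + ∑ i ∈ Ico 1 p, r^i := by
    rw [range_eq_Ico, ← Finset.sum_eq_sum_Ico_succ_bot (by omega : 0 < p)]
  rw [geom_sum_eq hr p] at h2
  rw [h1]
  simp at h2
  linear_combination -h2

lemma sc_exp (p : ℕ) (hp : 2 ≤ p) (i m : ℕ) :
    sc p i m = (((Complex.exp (Real.pi * Complex.I / p))^m)⁻¹^i
      - ((Complex.exp (Real.pi * Complex.I / p))^m)^i) * Complex.I / 2 := by
  have hp0 : (p:ℂ) ≠ 0 := Nat.cast_ne_zero.mpr (by omega)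
  have h0 : sc p i m = Complex.sin ((Real.pi * i * m / p : ℝ) : ℂ) := by
    unfold sc; exact Complex.ofReal_sin _
  have e1 : Complex.exp ((↑(m*i):ℂ) * (↑Real.pi * Complex.I / ↑p))
      = ((Complex.exp (↑Real.pi*Complex.I/↑p)) ^ m)^i := by
    rw [← pow_mul, ← Complex.exp_nat_mul]
  have key : ((Real.pi * i * m / p : ℝ) : ℂ) * Complex.I
      = (↑(m*i) : ℂ) * (↑Real.pi * Complex.I / ↑p) := by push_cast; ring
  rw [h0, Complex.sin,
    show -((Real.pi * i * m / p : ℝ) : ℂ) * Complex.I = -(((Real.pi * i * m / p : ℝ) : ℂ) * Complex.I) by ring,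
    key, Complex.exp_neg, e1, ← inv_pow]

lemma orth1 (p : ℕ) (hp : 2 ≤ p) (k k' : ℕ) (hk1 : 1 ≤ k) (hk2 : k ≤ p - 1)
    (hk1' : 1 ≤ k') (hk2' : k' ≤ p - 1) :
    ∑ i ∈ Icc 1 (p-1), sc p i k * sc p i k' = if k = k' then (p:ℂ)/2 else 0 := by
  have hp0 : (p:ℂ) ≠ 0 := Nat.cast_ne_zero.mpr (by omega)
  set ω := Complex.exp (↑Real.pi * Complex.I / (p:ℂ)) with hωdef
  have hω0 : ω ≠ 0 := Complex.exp_ne_zero _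
  have hωp : ω ^ p = -1 := by
    rw [hωdef, ← Complex.exp_nat_mul,
      show (p:ℂ) * (↑Real.pi * Complex.I / p) = ↑Real.pi * Complex.I by field_simp]
    exact Complex.exp_pi_mul_I
  have hprim : IsPrimitiveRoot ω (2*p) := by
    have h := Complex.isPrimitiveRoot_exp (2*p) (by omega)
    have : Complex.exp (2 * ↑Real.pi * Complex.I / ↑(2*p)) = ω := by
      rw [hωdef]; congr 1; push_cast; field_simp
    rwa [this] at h
  have hne1 : ∀ m : ℕ, 0 < m → m < 2*p → ω^m ≠ 1 := by
    intro m hm1 hm2 h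
    have := (hprim.pow_eq_one_iff_dvd m).mp h
    have := Nat.le_of_dvd hm1 this
    omega
  -- pointwise expansion
  have hsum : ∀ i : ℕ, sc p i k * sc p i k'
      = -(1/4) * (((ω^k)⁻¹*(ω^k')⁻¹)^i - ((ω^k)⁻¹*(ω^k'))^i - ((ω^k)*(ω^k')⁻¹)^i + ((ω^k)*(ω^k'))^i) := by
    intro i
    rw [sc_exp p hp i k, sc_exp p hp i k']
    simp only [mul_pow]
    linear_combination ((((ω^k)⁻¹)^i-(ω^k)^i)*(((ω^k')⁻¹)^i-(ω^k')^i)/4) * Complex.I_sq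
  rw [Finset.sum_congr rfl (fun i _ => hsum i), ← Finset.mul_sum,
    Finset.sum_add_distrib, Finset.sum_sub_distrib, Finset.sum_sub_distrib]
  have hcard : ∑ i ∈ Icc 1 (p-1), ((1:ℂ))^i = (p:ℂ) - 1 := by
    simp [Nat.card_Icc]
    rw [Nat.cast_sub (by omega)]
    simp
  have hup : ∀ m : ℕ, (ω^m)^p = (-1:ℂ)^m := by
    intro m; rw [← pow_mul, mul_comm, pow_mul, hωp]
  have hinv_neg : ∀ m : ℕ, ((-1:ℂ)^m)⁻¹ = (-1:ℂ)^m := by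
    intro m; rw [← inv_pow]; norm_num
  by_cases h : k = k'
  · subst h
    rw [if_pos rfl, ← mul_inv]
    have hB : (ω^k)⁻¹*(ω^k) = 1 := inv_mul_cancel₀ (pow_ne_zero _ hω0)
    have hC : (ω^k)*(ω^k)⁻¹ = 1 := mul_inv_cancel₀ (pow_ne_zero _ hω0)
    have hD1 : ω^k*ω^k ≠ 1 := by
      rw [← pow_add]; exact hne1 _ (by omega) (by omega)
    have hA1 : (ω^k*ω^k)⁻¹ ≠ 1 := fun hh => hD1 (inv_eq_one.mp hh)
    have hDp : (ω^k*ω^k)^p = 1 := by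
      rw [← pow_add, ← pow_mul, mul_comm, pow_mul, hωp]
      simp [← two_mul, pow_mul]
    have gD := geomF p hp _ hD1
    have gA := geomF p hp _ hA1
    rw [hDp] at gD
    rw [inv_pow, hDp, inv_one] at gA
    simp only [sub_self, zero_div] at gD gA
    rw [gD, gA, hB, hC, hcard]
    ring
  · rw [if_neg h]
    have huv : ω^k ≠ ω^k' := fun hh => h (hprim.pow_inj (by omega) (by omega) hh)
    have hC1 : ω^k*(ω^k')⁻¹ ≠ 1 := by
      intro hh; exact huv ((mul_inv_eq_one₀ (pow_ne_zero _ hω0)).mp hh)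
    have hD1 : ω^k*ω^k' ≠ 1 := by
      rw [← pow_add]; exact hne1 _ (by omega) (by omega)
    have hBeq : (ω^k)⁻¹*(ω^k') = (ω^k*(ω^k')⁻¹)⁻¹ := by rw [mul_inv, inv_inv]
    have hB1 : (ω^k*(ω^k')⁻¹)⁻¹ ≠ 1 := fun hh => hC1 (inv_eq_one.mp hh)
    have hA1 : (ω^k*ω^k')⁻¹ ≠ 1 := fun hh => hD1 (inv_eq_one.mp hh)
    have hDp : (ω^k*ω^k')^p = (-1:ℂ)^(k+k') := by
      rw [mul_pow, hup, hup, pow_add]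
    have hCp : (ω^k*(ω^k')⁻¹)^p = (-1:ℂ)^(k+k') := by
      rw [mul_pow, inv_pow, hup, hup, hinv_neg, pow_add]
    have hAp : ((ω^k*ω^k')⁻¹)^p = (-1:ℂ)^(k+k') := by
      rw [inv_pow, hDp, hinv_neg]
    have hBp : ((ω^k*(ω^k')⁻¹)⁻¹)^p = (-1:ℂ)^(k+k') := by
      rw [inv_pow, hCp, hinv_neg]
    rw [← mul_inv, hBeq, geomF p hp _ hA1, geomF p hp _ hB1, geomF p hp _ hC1,
      geomF p hp _ hD1, hAp, hBp, hCp, hDp]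
    exact aux2 ((-1:ℂ)^(k+k')) (ω^k*ω^k') (ω^k*(ω^k')⁻¹)
      (mul_ne_zero (pow_ne_zero _ hω0) (pow_ne_zero _ hω0)) hD1
      (mul_ne_zero (pow_ne_zero _ hω0) (inv_ne_zero (pow_ne_zero _ hω0))) hC1


lemma sum_swap4 (I J K L : Finset ℕ) (f : ℕ → ℕ → ℕ → ℕ → ℂ) :
    ∑ i ∈ I, ∑ j ∈ J, ∑ k ∈ K, ∑ l ∈ L, f i j k l
      = ∑ k ∈ K, ∑ l ∈ L, ∑ i ∈ I, ∑ j ∈ J, f i j k l := by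
  rw [show (∑ i ∈ I, ∑ j ∈ J, ∑ k ∈ K, ∑ l ∈ L, f i j k l)
      = ∑ i ∈ I, ∑ k ∈ K, ∑ j ∈ J, ∑ l ∈ L, f i j k l from
    Finset.sum_congr rfl fun i _ => Finset.sum_comm]
  rw [Finset.sum_comm]
  refine Finset.sum_congr rfl fun k _ => ?_
  rw [show (∑ i ∈ I, ∑ j ∈ J, ∑ l ∈ L, f i j k l)
      = ∑ i ∈ I, ∑ l ∈ L, ∑ j ∈ J, f i j k l from
    Finset.sum_congr rfl fun i _ => Finset.sum_comm]
  exact Finset.sum_comm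

lemma swap4 (I J K L : Finset ℕ) (g : ℕ → ℕ → ℂ) (A B : ℕ → ℕ → ℂ) (u v : ℕ → ℂ) :
    ∑ i ∈ I, ∑ j ∈ J, ((∑ k ∈ K, ∑ l ∈ L, g k l * A i k * B j l) * u i * v j)
      = ∑ k ∈ K, ∑ l ∈ L, g k l * (∑ i ∈ I, A i k * u i) * (∑ j ∈ J, B j l * v j) := by
  have h1 : ∀ i ∈ I, ∀ j ∈ J, (∑ k ∈ K, ∑ l ∈ L, g k l * A i k * B j l) * u i * v j
      = ∑ k ∈ K, ∑ l ∈ L, g k l * A i k * B j l * u i * v j := by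
    intro i _ j _
    rw [Finset.sum_mul, Finset.sum_mul]
    exact Finset.sum_congr rfl fun k _ => by rw [Finset.sum_mul, Finset.sum_mul]
  rw [Finset.sum_congr rfl fun i hi => Finset.sum_congr rfl fun j hj => h1 i hi j hj,
    sum_swap4]
  refine Finset.sum_congr rfl fun k _ => Finset.sum_congr rfl fun l _ => ?_
  rw [mul_assoc, Finset.sum_mul_sum, Finset.mul_sum]
  refine Finset.sum_congr rfl fun i _ => ?_
  rw [Finset.mul_sum]
  exact Finset.sum_congr rfl fun j _ => by ring



lemma cos_nat_pi (k : ℕ) : Real.cos (k * Real.pi) = (-1)^k := by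
  induction k with
  | zero => simp
  | succ n ih =>
    push_cast [add_mul, Real.cos_add, ih]
    simp [Real.cos_pi, Real.sin_pi]
    ring

lemma sc_comm (n i k : ℕ) : sc n i k = sc n k i := by
  unfold sc; norm_num [mul_comm, mul_assoc, mul_left_comm]

lemma sc_flip (p : ℕ) (hp : 2 ≤ p) (i k : ℕ) (hi : i ≤ p) :
    sc p (p - i) k = (-1:ℂ)^(k+1) * sc p i k := by
  unfold sc
  have hp0 : (p:ℝ) ≠ 0 := Nat.cast_ne_zero.mpr (by omega)
  have hcast : ((p - i : ℕ) : ℝ) = (p:ℝ) - i := by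
    rw [Nat.cast_sub hi]
  have harg : Real.pi * ((p - i : ℕ) : ℝ) * k / p = k * Real.pi - Real.pi * i * k / p := by
    rw [hcast]; field_simp
  rw [harg, Real.sin_sub, Real.sin_nat_mul_pi, cos_nat_pi]
  push_cast
  ring

lemma sum_reflect (p : ℕ) (hp : 2 ≤ p) (f : ℕ → ℂ) :
    ∑ i ∈ Icc 1 (p-1), f i = ∑ i ∈ Icc 1 (p-1), f (p - i) := by
  refine Finset.sum_nbij' (fun i => p - i) (fun i => p - i) ?_ ?_ ?_ ?_ ?_
  · intro a ha; simp only [mem_Icc] at ha ⊢; omega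
  · intro a ha; simp only [mem_Icc] at ha ⊢; omega
  · intro a ha; simp only [mem_Icc] at ha; omega
  · intro a ha; simp only [mem_Icc] at ha; omega
  · intro a ha; simp only [mem_Icc] at ha; congr 1; omega

lemma sign_even (k l : ℕ) (h : k % 2 = l % 2) : ((-1:ℂ))^(k+1) * (-1)^(l+1) = 1 := by
  rw [← pow_add]
  exact Even.neg_one_pow (by rw [Nat.even_iff]; omega)

lemma sign_odd (k l : ℕ) (h : ¬ k % 2 = l % 2) : ((-1:ℂ))^(k+1) * (-1)^(l+1) = -1 := by
  rw [← pow_add]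
  exact Odd.neg_one_pow (by rw [Nat.odd_iff]; omega)

lemma orth2 (p : ℕ) (hp : 2 ≤ p) (i i' : ℕ) (hi1 : 1 ≤ i) (hi2 : i ≤ p - 1)
    (hi1' : 1 ≤ i') (hi2' : i' ≤ p - 1) :
    ∑ k ∈ Icc 1 (p-1), sc p i k * sc p i' k = if i = i' then (p:ℂ)/2 else 0 := by
  rw [Finset.sum_congr rfl fun k _ => by rw [sc_comm p i k, sc_comm p i' k]]
  exact orth1 p hp i i' hi1 hi2 hi1' hi2'

lemma key (p q : ℕ) (hp : 2 ≤ p) (hq : 2 ≤ q) (g : ℕ → ℕ → ℂ) (k₀ l₀ : ℕ)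
    (hk1 : 1 ≤ k₀) (hk2 : k₀ ≤ p-1) (hl1 : 1 ≤ l₀) (hl2 : l₀ ≤ q-1) :
    ∑ i ∈ Icc 1 (p-1), ∑ j ∈ Icc 1 (q-1),
      ((∑ k ∈ Icc 1 (p-1), ∑ l ∈ Icc 1 (q-1), g k l * sc p i k * sc q j l)
        * sc p i k₀ * sc q j l₀)
      = (p:ℂ)/2 * ((q:ℂ)/2) * g k₀ l₀ := by
  rw [swap4]
  have horth : ∀ k ∈ Icc 1 (p-1), ∀ l ∈ Icc 1 (q-1),
      g k l * (∑ i ∈ Icc 1 (p-1), sc p i k * sc p i k₀)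
        * (∑ j ∈ Icc 1 (q-1), sc q j l * sc q j l₀)
      = (if k = k₀ then (1:ℂ) else 0) * (if l = l₀ then (1:ℂ) else 0)
          * (g k l * ((p:ℂ)/2) * ((q:ℂ)/2)) := by
    intro k hk l hl
    rw [mem_Icc] at hk hl
    rw [orth1 p hp k k₀ hk.1 hk.2 hk1 hk2, orth1 q hq l l₀ hl.1 hl.2 hl1 hl2]
    split_ifs <;> ring
  rw [Finset.sum_congr rfl fun k hk => Finset.sum_congr rfl fun l hl => horth k hk l hl]
  rw [Finset.sum_eq_single_of_mem k₀ (mem_Icc.mpr ⟨hk1, hk2⟩) (fun k _ hne => by simp [hne])]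
  rw [Finset.sum_eq_single_of_mem l₀ (mem_Icc.mpr ⟨hl1, hl2⟩) (fun l _ hne => by simp [hne])]
  rw [if_pos rfl, if_pos rfl]
  ring


/-- For coprime `p, q ≥ 2` and any values `c (k, l)` prescribed on the set `𝒜` of
admissible pairs (`1 ≤ k ≤ p-1`, `1 ≤ l ≤ q-1`, `k ≡ l (mod 2)`), there is a unique
family `a (i, j)` (`1 ≤ i ≤ p-1`, `1 ≤ j ≤ q-1`, encoded as a function `ℕ → ℕ → ℂ`
vanishing outside this index set) which is symmetric under `(i, j) ↦ (p-i, q-j)` and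
satisfies `∑_{i,j} a (i, j) sin(πik/p) sin(πjl/q) = c (k, l)` for every `(k, l) ∈ 𝒜`. -/
theorem stmt_14 (p q : ℕ) (hp : 2 ≤ p) (hq : 2 ≤ q) (hpq : Nat.Coprime p q)
    (c : ℕ → ℕ → ℂ) :
    ∃! a : ℕ → ℕ → ℂ,
      (∀ i j : ℕ, ¬(1 ≤ i ∧ i ≤ p - 1 ∧ 1 ≤ j ∧ j ≤ q - 1) → a i j = 0) ∧
      (∀ i j : ℕ, 1 ≤ i → i ≤ p - 1 → 1 ≤ j → j ≤ q - 1 → a i j = a (p - i) (q - j)) ∧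
      (∀ k l : ℕ, 1 ≤ k → k ≤ p - 1 → 1 ≤ l → l ≤ q - 1 → k % 2 = l % 2 →
        ∑ i ∈ Finset.Icc 1 (p - 1), ∑ j ∈ Finset.Icc 1 (q - 1),
            a i j * ((Real.sin (Real.pi * i * k / p) : ℝ) : ℂ) *
              ((Real.sin (Real.pi * j * l / q) : ℝ) : ℂ) = c k l) := by
  have hsc : ∀ (n i k : ℕ), ((Real.sin (Real.pi * i * k / n) : ℝ) : ℂ) = sc n i k :=
    fun _ _ _ => rfl
  have hp0 : (p:ℂ) ≠ 0 := Nat.cast_ne_zero.mpr (by omega)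
  have hq0 : (q:ℂ) ≠ 0 := Nat.cast_ne_zero.mpr (by omega)
  set cc : ℕ → ℕ → ℂ := fun k l => if k % 2 = l % 2 then c k l else 0 with hcc
  set a0 : ℕ → ℕ → ℂ := fun i j =>
    if 1 ≤ i ∧ i ≤ p - 1 ∧ 1 ≤ j ∧ j ≤ q - 1 then
      (4/((p:ℂ)*(q:ℂ))) * ∑ k ∈ Icc 1 (p-1), ∑ l ∈ Icc 1 (q-1), cc k l * sc p i k * sc q j l
    else 0 with ha0
  refine ⟨a0, ⟨fun i j hij => by simp only [ha0, if_neg hij], ?_, ?_⟩, ?_⟩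
  · -- symmetry
    intro i j hi1 hi2 hj1 hj2
    have hbd1 : 1 ≤ i ∧ i ≤ p - 1 ∧ 1 ≤ j ∧ j ≤ q - 1 := ⟨hi1, hi2, hj1, hj2⟩
    have hbd2 : 1 ≤ p - i ∧ p - i ≤ p - 1 ∧ 1 ≤ q - j ∧ q - j ≤ q - 1 := by omega
    simp only [ha0, if_pos hbd1, if_pos hbd2]
    congr 1
    refine Finset.sum_congr rfl fun k _ => Finset.sum_congr rfl fun l _ => ?_
    by_cases hkl : k % 2 = l % 2
    · rw [sc_flip p hp i k (by omega), sc_flip q hq j l (by omega)]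
      have hs := sign_even k l hkl
      linear_combination (-(cc k l * sc p i k * sc q j l)) * hs
    · simp [hcc, hkl]
  · -- transform equations
    intro k₀ l₀ hk1 hk2 hl1 hl2 hpar
    simp only [hsc]
    have hstep : ∀ i ∈ Icc 1 (p-1), ∀ j ∈ Icc 1 (q-1),
        a0 i j * sc p i k₀ * sc q j l₀
        = (4/((p:ℂ)*(q:ℂ))) *
          ((∑ k ∈ Icc 1 (p-1), ∑ l ∈ Icc 1 (q-1), cc k l * sc p i k * sc q j l)
            * sc p i k₀ * sc q j l₀) := by
      intro i hi j hj
      rw [mem_Icc] at hi hj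
      simp only [ha0, if_pos (show 1 ≤ i ∧ i ≤ p - 1 ∧ 1 ≤ j ∧ j ≤ q - 1 from
        ⟨hi.1, hi.2, hj.1, hj.2⟩)]
      ring
    rw [Finset.sum_congr rfl fun i hi => Finset.sum_congr rfl fun j hj => hstep i hi j hj]
    rw [Finset.sum_congr rfl fun i _ => (Finset.mul_sum _ _ _).symm, ← Finset.mul_sum]
    rw [key p q hp hq cc k₀ l₀ hk1 hk2 hl1 hl2]
    have : cc k₀ l₀ = c k₀ l₀ := by simp [hcc, hpar]
    rw [this]
    field_simp
    ring
  · -- uniqueness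
    intro a' ⟨h0, hsym, hsum⟩
    funext i j
    by_cases hij : 1 ≤ i ∧ i ≤ p - 1 ∧ 1 ≤ j ∧ j ≤ q - 1
    · -- in range
      obtain ⟨hi1, hi2, hj1, hj2⟩ := hij
      -- T k l = transform of a'
      have hT : ∀ k ∈ Icc 1 (p-1), ∀ l ∈ Icc 1 (q-1),
          (∑ u ∈ Icc 1 (p-1), ∑ v ∈ Icc 1 (q-1), a' u v * sc p u k * sc q v l) = cc k l := by
        intro k hk l hl
        rw [mem_Icc] at hk hl
        by_cases hkl : k % 2 = l % 2
        · have := hsum k l hk.1 hk.2 hl.1 hl.2 hkl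
          simp only [hsc] at this
          rw [this]
          simp [hcc, hkl]
        · -- reflection shows the sum vanishes
          have hrefl : (∑ u ∈ Icc 1 (p-1), ∑ v ∈ Icc 1 (q-1), a' u v * sc p u k * sc q v l)
              = -(∑ u ∈ Icc 1 (p-1), ∑ v ∈ Icc 1 (q-1), a' u v * sc p u k * sc q v l) := by
            conv_lhs =>
              rw [sum_reflect p hp (fun u => ∑ v ∈ Icc 1 (q-1), a' u v * sc p u k * sc q v l)]
            rw [Finset.sum_congr rfl fun u _ =>
              sum_reflect q hq (fun v => a' (p-u) v * sc p (p-u) k * sc q v l)]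
            rw [show -(∑ u ∈ Icc 1 (p-1), ∑ v ∈ Icc 1 (q-1), a' u v * sc p u k * sc q v l)
                = ∑ u ∈ Icc 1 (p-1), ∑ v ∈ Icc 1 (q-1), -(a' u v * sc p u k * sc q v l) by
              simp [Finset.sum_neg_distrib]]
            refine Finset.sum_congr rfl fun u hu => Finset.sum_congr rfl fun v hv => ?_
            rw [mem_Icc] at hu hv
            rw [← hsym u v hu.1 hu.2 hv.1 hv.2,
              sc_flip p hp u k (by omega), sc_flip q hq v l (by omega)]
            have hs := sign_odd k l hkl
            linear_combination (a' u v * sc p u k * sc q v l) * hs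
          have h2 : (2:ℂ) * (∑ u ∈ Icc 1 (p-1), ∑ v ∈ Icc 1 (q-1),
              a' u v * sc p u k * sc q v l) = 0 := by linear_combination hrefl
          rcases mul_eq_zero.mp h2 with hz | hz
          · norm_num at hz
          · simp only [hcc, if_neg hkl]
            exact hz
      -- inversion
      have hinv : ∑ k ∈ Icc 1 (p-1), ∑ l ∈ Icc 1 (q-1),
          ((∑ u ∈ Icc 1 (p-1), ∑ v ∈ Icc 1 (q-1), a' u v * sc p u k * sc q v l)
            * sc p i k * sc q j l)
          = a' i j * ((p:ℂ)/2) * ((q:ℂ)/2) := by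
        rw [swap4 (Icc 1 (p-1)) (Icc 1 (q-1)) (Icc 1 (p-1)) (Icc 1 (q-1)) a'
          (fun k u => sc p u k) (fun l v => sc q v l) (fun k => sc p i k) (fun l => sc q j l)]
        have horth : ∀ u ∈ Icc 1 (p-1), ∀ v ∈ Icc 1 (q-1),
            a' u v * (∑ k ∈ Icc 1 (p-1), sc p u k * sc p i k)
              * (∑ l ∈ Icc 1 (q-1), sc q v l * sc q j l)
            = (if u = i then (1:ℂ) else 0) * (if v = j then (1:ℂ) else 0)
                * (a' u v * ((p:ℂ)/2) * ((q:ℂ)/2)) := by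
          intro u hu v hv
          rw [mem_Icc] at hu hv
          rw [orth2 p hp u i hu.1 hu.2 hi1 hi2, orth2 q hq v j hv.1 hv.2 hj1 hj2]
          split_ifs <;> ring
        rw [Finset.sum_congr rfl fun u hu => Finset.sum_congr rfl fun v hv => horth u hu v hv]
        rw [Finset.sum_eq_single_of_mem i (mem_Icc.mpr ⟨hi1, hi2⟩) (fun u _ hne => by simp [hne])]
        rw [Finset.sum_eq_single_of_mem j (mem_Icc.mpr ⟨hj1, hj2⟩) (fun v _ hne => by simp [hne])]
        rw [if_pos rfl, if_pos rfl]
        ring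
      have hcceq : ∑ k ∈ Icc 1 (p-1), ∑ l ∈ Icc 1 (q-1),
          ((∑ u ∈ Icc 1 (p-1), ∑ v ∈ Icc 1 (q-1), a' u v * sc p u k * sc q v l)
            * sc p i k * sc q j l)
          = ∑ k ∈ Icc 1 (p-1), ∑ l ∈ Icc 1 (q-1), cc k l * sc p i k * sc q j l := by
        refine Finset.sum_congr rfl fun k hk => Finset.sum_congr rfl fun l hl => ?_
        rw [hT k hk l hl]
      rw [hcceq] at hinv
      simp only [ha0, if_pos (show 1 ≤ i ∧ i ≤ p - 1 ∧ 1 ≤ j ∧ j ≤ q - 1 from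
        ⟨hi1, hi2, hj1, hj2⟩)]
      rw [hinv]
      field_simp
      ring
    · rw [h0 i j hij]
      simp only [ha0, if_neg hij]
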